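/- Let T > 0 and let u : ℝ × [0,T) → ℝ be a classical periodic solution of the Fornberg–Whitham equation with initial value u₀(x) = u(x,0). Then for every x ∈ ℝ and every t ∈ [0,T), |u(x,t)| ≤ sup_{y∈[0,1]} |u₀(y)| + (e^t - 1) (∫_0^1 u₀(y)² dy)^{1/2}. In particular, if T < ∞ then sup over x ∈ ℝ and t ∈ [0,T) of |u(x,t)| is finite. -/

import Mathlib

open MeasureTheory

/-- The 1-periodic convolution kernel of `(id - ∂ₓ²)⁻¹` on the circle, on `[0,1)`. -/
noncomputable def FWKernel (y : ℝ) : ℝ :=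
  (Real.exp y + Real.exp (1 - y)) / (2 * (Real.exp 1 - 1))

/-- A classical periodic solution of the Fornberg–Whitham equation on `ℝ × [0,T)`:
`u` is 1-periodic in `x`, has continuous partial derivatives `ux = ∂ₓ u` and
`ut = ∂ₜ u` on `ℝ × [0,T)`, and satisfies
`∂ₜ u + (3/2) u ∂ₓ u = ∫_0^1 K(y) ∂ₓ u(x - y, t) dy`. -/
def IsClassicalFWSolution (T : ℝ) (u ux ut : ℝ → ℝ → ℝ) : Prop :=
  ContinuousOn (fun p : ℝ × ℝ => u p.1 p.2) (Set.univ ×ˢ Set.Ico 0 T) ∧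
  (∀ x : ℝ, ∀ t ∈ Set.Ico (0 : ℝ) T, u (x + 1) t = u x t) ∧
  (∀ x : ℝ, ∀ t ∈ Set.Ico (0 : ℝ) T, HasDerivAt (fun x' => u x' t) (ux x t) x) ∧
  (∀ x : ℝ, ∀ t ∈ Set.Ico (0 : ℝ) T,
    HasDerivWithinAt (fun t' => u x t') (ut x t) (Set.Ico 0 T) t) ∧
  ContinuousOn (fun p : ℝ × ℝ => ux p.1 p.2) (Set.univ ×ˢ Set.Ico 0 T) ∧
  ContinuousOn (fun p : ℝ × ℝ => ut p.1 p.2) (Set.univ ×ˢ Set.Ico 0 T) ∧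
  (∀ x : ℝ, ∀ t ∈ Set.Ico (0 : ℝ) T,
    ut x t + (3 / 2) * u x t * ux x t = ∫ y in (0:ℝ)..1, FWKernel y * ux (x - y) t)

open Set Filter Topology intervalIntegral

noncomputable def FWKernel' (y : ℝ) : ℝ :=
  (Real.exp y - Real.exp (1 - y)) / (2 * (Real.exp 1 - 1))

lemma fwkernel_hasDerivAt (y : ℝ) : HasDerivAt FWKernel (FWKernel' y) y := by
  unfold FWKernel FWKernel'
  have h1 : HasDerivAt (fun y : ℝ => Real.exp y + Real.exp (1 - y))
      (Real.exp y - Real.exp (1 - y)) y := by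
    have h2 : HasDerivAt (fun y : ℝ => Real.exp (1 - y)) (-Real.exp (1 - y)) y := by
      have := (Real.hasDerivAt_exp (1 - y)).comp y ((hasDerivAt_id y).const_sub 1)
      simpa [Function.comp_def] using this
    have := (Real.hasDerivAt_exp y).add h2; rw [← sub_eq_add_neg] at this; exact this
  simpa using h1.div_const (2 * (Real.exp 1 - 1))

lemma fwkernel'_abs_le {y : ℝ} (h0 : 0 ≤ y) (h1 : y ≤ 1) : |FWKernel' y| ≤ 1 / 2 := by
  unfold FWKernel'
  have he : (1 : ℝ) < Real.exp 1 := by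
    have := Real.exp_one_gt_d9; linarith
  rw [abs_div, abs_of_pos (by linarith : (0:ℝ) < 2 * (Real.exp 1 - 1))]
  rw [div_le_div_iff₀ (by linarith) (by norm_num : (0:ℝ) < 2)]
  have hy1 : Real.exp y ≤ Real.exp 1 := Real.exp_le_exp.2 h1
  have hy2 : Real.exp y ≥ 1 := by simpa using Real.exp_le_exp.2 h0
  have hz1 : Real.exp (1 - y) ≤ Real.exp 1 := Real.exp_le_exp.2 (by linarith)
  have hz2 : Real.exp (1 - y) ≥ 1 := by simpa using Real.exp_le_exp.2 (by linarith : (0:ℝ) ≤ 1 - y)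
  rcases abs_cases (Real.exp y - Real.exp (1 - y)) with ⟨h, _⟩ | ⟨h, _⟩ <;> rw [h] <;> nlinarith

lemma fwkernel_one_eq : FWKernel 1 = FWKernel 0 := by
  unfold FWKernel; norm_num; ring

/-- baby Cauchy–Schwarz : `∫₀¹ |v| ≤ √(∫₀¹ v²)` for continuous `v`. -/
lemma l1_le_sqrt_l2 {v : ℝ → ℝ} (hv : Continuous v) :
    (∫ y in (0:ℝ)..1, |v y|) ≤ Real.sqrt (∫ y in (0:ℝ)..1, (v y) ^ 2) := by
  set E := ∫ y in (0:ℝ)..1, (v y) ^ 2 with hE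
  have hE0 : 0 ≤ E := intervalIntegral.integral_nonneg (by norm_num)
    (fun y _ => sq_nonneg _)
  have key : ∀ c : ℝ, 0 < c → (∫ y in (0:ℝ)..1, |v y|) ≤ (E + c ^ 2) / (2 * c) := by
    intro c hc
    have hpt : ∀ y ∈ Icc (0:ℝ) 1, |v y| ≤ ((v y) ^ 2 + c ^ 2) / (2 * c) := by
      intro y _
      rw [le_div_iff₀ (by linarith)]
      nlinarith [sq_nonneg (|v y| - c), sq_abs (v y)]
    have hint : (∫ y in (0:ℝ)..1, |v y|) ≤ ∫ y in (0:ℝ)..1, ((v y) ^ 2 + c ^ 2) / (2 * c) :=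
      intervalIntegral.integral_mono_on (by norm_num)
        (hv.abs.intervalIntegrable _ _)
        (((hv.pow 2).add continuous_const).div_const _ |>.intervalIntegrable _ _) hpt
    calc (∫ y in (0:ℝ)..1, |v y|) ≤ ∫ y in (0:ℝ)..1, ((v y) ^ 2 + c ^ 2) / (2 * c) := hint
      _ = (E + c ^ 2) / (2 * c) := by
          rw [intervalIntegral.integral_div]
          congr 1
          rw [intervalIntegral.integral_add (f := fun y => (v y) ^ 2) (g := fun _ => c ^ 2) ((hv.pow 2).intervalIntegrable _ _)
            (continuous_const.intervalIntegrable _ _)]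
          simp [hE]
  rcases eq_or_lt_of_le hE0 with h | h
  · have h0 : (∫ y in (0:ℝ)..1, |v y|) ≤ 0 := by
      have := fun c hc => key c hc
      by_contra hcon
      push_neg at hcon
      have h2 := key (∫ y in (0:ℝ)..1, |v y|) hcon
      rw [← h] at h2
      have h3 : (0 + (∫ y in (0:ℝ)..1, |v y|) ^ 2) / (2 * ∫ y in (0:ℝ)..1, |v y|)
          = (∫ y in (0:ℝ)..1, |v y|) / 2 := by
        field_simp; ring
      rw [h3] at h2
      linarith
    rw [← h, Real.sqrt_zero]; simpa using h0
  · have h2 := key (Real.sqrt E) (Real.sqrt_pos.2 h)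
    have hsq : Real.sqrt E ^ 2 = E := Real.sq_sqrt hE0
    calc (∫ y in (0:ℝ)..1, |v y|) ≤ (E + Real.sqrt E ^ 2) / (2 * Real.sqrt E) := h2
      _ = Real.sqrt E := by
          rw [hsq]
          rw [div_eq_iff (by positivity)]
          nlinarith [hsq]

section FW
variable {T : ℝ} {u ux ut : ℝ → ℝ → ℝ}

lemma fw_slice_x (hc : ContinuousOn (fun p : ℝ × ℝ => u p.1 p.2) (univ ×ˢ Ico 0 T))
    {t : ℝ} (ht : t ∈ Ico (0:ℝ) T) : Continuous (fun x => u x t) := by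
  rw [← continuousOn_univ]
  exact hc.comp ((continuous_id.prodMk continuous_const).continuousOn)
    (fun x _ => ⟨trivial, ht⟩)

lemma fw_slice_t (hc : ContinuousOn (fun p : ℝ × ℝ => u p.1 p.2) (univ ×ˢ Ico 0 T))
    (x : ℝ) : ContinuousOn (fun s => u x s) (Ico 0 T) :=
  hc.comp ((continuous_const.prodMk continuous_id).continuousOn)
    (fun s hs => ⟨trivial, hs⟩)

lemma fw_periodic (hper : ∀ x : ℝ, ∀ t ∈ Ico (0:ℝ) T, u (x + 1) t = u x t)
    {t : ℝ} (ht : t ∈ Ico (0:ℝ) T) : Function.Periodic (fun x => u x t) 1 :=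
  fun x => hper x t ht

lemma fw_fract (hper : ∀ x : ℝ, ∀ t ∈ Ico (0:ℝ) T, u (x + 1) t = u x t)
    {t : ℝ} (ht : t ∈ Ico (0:ℝ) T) (x : ℝ) : u (Int.fract x) t = u x t := by
  have h : u (x - (⌊x⌋ : ℤ) • (1:ℝ)) t = u x t := (fw_periodic hper ht).sub_zsmul_eq ⌊x⌋
  rw [Int.fract]
  simpa using h

/-- Integration by parts : `∫ K uₓ(x-·) = ∫ K' u(x-·)`. -/
lemma fw_conv_eq (hc : ContinuousOn (fun p : ℝ × ℝ => u p.1 p.2) (univ ×ˢ Ico 0 T))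
    (hper : ∀ x : ℝ, ∀ t ∈ Ico (0:ℝ) T, u (x + 1) t = u x t)
    (hux : ∀ x : ℝ, ∀ t ∈ Ico (0:ℝ) T, HasDerivAt (fun x' => u x' t) (ux x t) x)
    (hcx : ContinuousOn (fun p : ℝ × ℝ => ux p.1 p.2) (univ ×ˢ Ico 0 T))
    {t : ℝ} (ht : t ∈ Ico (0:ℝ) T) (x : ℝ) :
    ∫ y in (0:ℝ)..1, FWKernel y * ux (x - y) t
      = ∫ y in (0:ℝ)..1, FWKernel' y * u (x - y) t := by
  have hK : Continuous FWKernel :=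
    continuous_iff_continuousAt.2 fun y => (fwkernel_hasDerivAt y).continuousAt
  have hK' : Continuous FWKernel' := by
    unfold FWKernel'
    exact (Real.continuous_exp.sub (Real.continuous_exp.comp (continuous_const.sub
      continuous_id))).div_const _
  have hcu : Continuous (fun z => u z t) := fw_slice_x hc ht
  have hcux : Continuous (fun z => ux z t) := fw_slice_x hcx ht
  have hcu' : Continuous (fun y => u (x - y) t) := hcu.comp (continuous_const.sub continuous_id)
  have hcux' : Continuous (fun y => ux (x - y) t) :=
    hcux.comp (continuous_const.sub continuous_id)
  have hderiv : ∀ y ∈ uIcc (0:ℝ) 1, HasDerivAt (fun y => FWKernel y * u (x - y) t)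
      (FWKernel' y * u (x - y) t - FWKernel y * ux (x - y) t) y := by
    intro y _
    have h1 : HasDerivAt (fun y => u (x - y) t) (-(ux (x - y) t)) y := by
      have := (hux (x - y) t ht).comp y ((hasDerivAt_id y).const_sub x)
      simpa [Function.comp_def] using this
    have := (fwkernel_hasDerivAt y).mul h1
    refine this.congr_deriv ?_; ring
  have hint : IntervalIntegrable
      (fun y => FWKernel' y * u (x - y) t - FWKernel y * ux (x - y) t) volume 0 1 :=
    ((hK'.mul hcu').sub (hK.mul hcux')).intervalIntegrable _ _
  have h0 := intervalIntegral.integral_eq_sub_of_hasDerivAt hderiv hint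
  have hb : FWKernel 1 * u (x - 1) t - FWKernel 0 * u (x - 0) t = 0 := by
    rw [fwkernel_one_eq]
    have : u (x - 1) t = u x t := by
      have := hper (x - 1) t ht; simpa using this.symm
    rw [this]; simp
  rw [hb] at h0
  have h3 : (∫ y in (0:ℝ)..1, FWKernel' y * u (x - y) t)
      - ∫ y in (0:ℝ)..1, FWKernel y * ux (x - y) t = 0 := by
    rw [← intervalIntegral.integral_sub (f := fun y => FWKernel' y * u (x - y) t)
      (g := fun y => FWKernel y * ux (x - y) t) ((hK'.mul hcu').intervalIntegrable (0:ℝ) 1)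
      ((hK.mul hcux').intervalIntegrable (0:ℝ) 1)]
    exact h0
  linarith

/-- The convolution bound : `|∫ K' u(x-·)| ≤ (1/2) ∫₀¹ |u|`. -/
lemma fw_conv_bound (hc : ContinuousOn (fun p : ℝ × ℝ => u p.1 p.2) (univ ×ˢ Ico 0 T))
    (hper : ∀ x : ℝ, ∀ t ∈ Ico (0:ℝ) T, u (x + 1) t = u x t)
    {t : ℝ} (ht : t ∈ Ico (0:ℝ) T) (x : ℝ) :
    |∫ y in (0:ℝ)..1, FWKernel' y * u (x - y) t| ≤ (1/2) * ∫ w in (0:ℝ)..1, |u w t| := by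
  have hK' : Continuous FWKernel' := by
    unfold FWKernel'
    exact (Real.continuous_exp.sub (Real.continuous_exp.comp (continuous_const.sub
      continuous_id))).div_const _
  have hcu : Continuous (fun z => u z t) := fw_slice_x hc ht
  have hcu' : Continuous (fun y => u (x - y) t) := hcu.comp (continuous_const.sub continuous_id)
  calc |∫ y in (0:ℝ)..1, FWKernel' y * u (x - y) t|
      ≤ ∫ y in (0:ℝ)..1, |FWKernel' y * u (x - y) t| :=
        intervalIntegral.abs_integral_le_integral_abs (by norm_num)
    _ ≤ ∫ y in (0:ℝ)..1, (1/2) * |u (x - y) t| := by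
        apply intervalIntegral.integral_mono_on (by norm_num)
          ((hK'.mul hcu').abs.intervalIntegrable _ _)
          ((continuous_const.mul hcu'.abs).intervalIntegrable _ _)
        intro y hy
        show |FWKernel' y * u (x - y) t| ≤ 1/2 * |u (x - y) t|
        rw [abs_mul]
        exact mul_le_mul_of_nonneg_right (fwkernel'_abs_le hy.1 hy.2) (abs_nonneg _)
    _ = (1/2) * ∫ y in (0:ℝ)..1, |u (x - y) t| := intervalIntegral.integral_const_mul _ _
    _ = (1/2) * ∫ w in (0:ℝ)..1, |u w t| := by
        congr 1
        rw [intervalIntegral.integral_comp_sub_left (fun w => |u w t|) x]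
        have hper' : Function.Periodic (fun w => |u w t|) 1 := fun w => by
          simp only []; rw [hper w t ht]
        have := hper'.intervalIntegral_add_eq (x - 1) 0
        simpa using this

/-- If `ψ c = 0` and `ψ' c < 0` then `ψ > 0` somewhere just to the left of `c`. -/
lemma pos_left_of_neg_deriv {ψ : ℝ → ℝ} {c d : ℝ} (hc : 0 < c) (hd : HasDerivAt ψ d c)
    (hψc : ψ c = 0) (hd0 : d < 0) : ∃ s, s ∈ Ioo 0 c ∧ 0 < ψ s := by
  have h1 : Tendsto (slope ψ c) (𝓝[≠] c) (𝓝 d) := hasDerivAt_iff_tendsto_slope.1 hd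
  have h2 : Tendsto (slope ψ c) (𝓝[<] c) (𝓝 d) :=
    h1.mono_left (nhdsWithin_mono _ fun s hs => ne_of_lt hs)
  have h3 : ∀ᶠ s in 𝓝[<] c, slope ψ c s < d / 2 :=
    h2.eventually_lt_const (by linarith)
  have h4 : ∀ᶠ s in 𝓝[<] c, 0 < s :=
    eventually_nhdsWithin_of_eventually_nhds (eventually_gt_nhds hc)
  have h5 : ∀ᶠ s in 𝓝[<] c, s < c := eventually_mem_nhdsWithin
  obtain ⟨s, hs3, hs4, hs5⟩ := (h3.and (h4.and h5)).exists
  refine ⟨s, ⟨hs4, hs5⟩, ?_⟩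
  rw [slope_def_field, hψc, sub_zero] at hs3
  by_contra hcon
  push_neg at hcon
  have : 0 ≤ ψ s / (s - c) := div_nonneg_of_nonpos hcon (by linarith)
  linarith

lemma fw_E_nonneg (t : ℝ) : 0 ≤ ∫ y in (0:ℝ)..1, (u y t) ^ 2 :=
  intervalIntegral.integral_nonneg (by norm_num) (fun y _ => sq_nonneg _)

/-- Continuity of the energy on `[0,T)`. -/
lemma fw_E_cont (hc : ContinuousOn (fun p : ℝ × ℝ => u p.1 p.2) (univ ×ˢ Ico 0 T))
    {t₀ : ℝ} (ht₀ : t₀ ∈ Ico (0:ℝ) T) :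
    ContinuousWithinAt (fun t => ∫ y in (0:ℝ)..1, (u y t) ^ 2) (Ico 0 T) t₀ := by
  set b := (t₀ + T) / 2 with hb
  have hbT : b < T := by rcases ht₀ with ⟨h1, h2⟩; rw [hb]; linarith
  have ht₀b : t₀ < b := by rcases ht₀ with ⟨h1, h2⟩; rw [hb]; linarith
  have hKc : IsCompact (Icc (0:ℝ) 1 ×ˢ Icc (0:ℝ) b) := isCompact_Icc.prod isCompact_Icc
  have hsub : Icc (0:ℝ) 1 ×ˢ Icc (0:ℝ) b ⊆ univ ×ˢ Ico 0 T := fun p hp =>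
    ⟨trivial, hp.2.1, lt_of_le_of_lt hp.2.2 hbT⟩
  obtain ⟨C, hC⟩ := hKc.exists_bound_of_continuousOn
    ((hc.mono hsub).pow 2)
  apply intervalIntegral.continuousWithinAt_of_dominated_interval (bound := fun _ => C)
  · filter_upwards [eventually_mem_nhdsWithin] with s hs
    exact ((fw_slice_x hc hs).pow 2).aestronglyMeasurable
  · have hev : ∀ᶠ s in 𝓝[Ico 0 T] t₀, s ∈ Ico 0 T ∧ s < b := by
      filter_upwards [eventually_mem_nhdsWithin,
        eventually_nhdsWithin_of_eventually_nhds (eventually_lt_nhds ht₀b)] with s h1 h2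
      exact ⟨h1, h2⟩
    filter_upwards [hev] with s hs
    refine Eventually.of_forall fun y hy => ?_
    rw [uIoc_of_le (by norm_num : (0:ℝ) ≤ 1)] at hy
    have := hC (y, s) ⟨⟨le_of_lt hy.1, hy.2⟩, ⟨hs.1.1, le_of_lt hs.2⟩⟩
    simpa using this
  · exact intervalIntegrable_const
  · refine Eventually.of_forall fun y hy => ?_
    exact ((fw_slice_t hc y).pow 2) t₀ ht₀

/-- Differentiation of the energy under the integral sign, at interior times. -/
lemma fw_E_deriv (hc : ContinuousOn (fun p : ℝ × ℝ => u p.1 p.2) (univ ×ˢ Ico 0 T))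
    (hut : ∀ x : ℝ, ∀ t ∈ Ico (0:ℝ) T,
      HasDerivWithinAt (fun t' => u x t') (ut x t) (Ico 0 T) t)
    (hct : ContinuousOn (fun p : ℝ × ℝ => ut p.1 p.2) (univ ×ˢ Ico 0 T))
    {t₀ : ℝ} (ht₀ : t₀ ∈ Ioo (0:ℝ) T) :
    HasDerivAt (fun t => ∫ y in (0:ℝ)..1, (u y t) ^ 2)
      (∫ y in (0:ℝ)..1, 2 * u y t₀ * ut y t₀) t₀ := by
  obtain ⟨ht1, ht2⟩ := ht₀
  set ε := min t₀ (T - t₀) / 2 with hε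
  have hε0 : 0 < ε := by
    have : 0 < min t₀ (T - t₀) := lt_min ht1 (by linarith)
    positivity
  have hball : Metric.ball t₀ ε ⊆ Ioo 0 T := by
    intro s hs
    rw [Metric.mem_ball, Real.dist_eq, abs_lt] at hs
    have h1 : ε ≤ t₀ / 2 := by
      rw [hε]; have := min_le_left t₀ (T - t₀); linarith
    have h2 : ε ≤ (T - t₀) / 2 := by
      rw [hε]; have := min_le_right t₀ (T - t₀); linarith
    constructor <;> [linarith; linarith]
  have hIoosub : Ioo (0:ℝ) T ⊆ Ico 0 T := Ioo_subset_Ico_self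
  -- bound on the compact set
  have hKc : IsCompact (Icc (0:ℝ) 1 ×ˢ Icc (t₀ - ε) (t₀ + ε)) := isCompact_Icc.prod isCompact_Icc
  have hsub : Icc (0:ℝ) 1 ×ˢ Icc (t₀ - ε) (t₀ + ε) ⊆ univ ×ˢ Ico 0 T := by
    intro p hp
    refine ⟨trivial, ?_, ?_⟩
    · have h1 : ε ≤ t₀ / 2 := by
        rw [hε]; have := min_le_left t₀ (T - t₀); linarith
      have := hp.2.1; linarith
    · have h2 : ε ≤ (T - t₀) / 2 := by
        rw [hε]; have := min_le_right t₀ (T - t₀); linarith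
      have := hp.2.2; linarith
  obtain ⟨C, hC⟩ := hKc.exists_bound_of_continuousOn
    (((hc.mono hsub).const_smul 2).mul (hct.mono hsub))
  have key := intervalIntegral.hasDerivAt_integral_of_dominated_loc_of_deriv_le
    (F := fun t y => (u y t) ^ 2) (F' := fun t y => 2 * u y t * ut y t)
    (x₀ := t₀) (a := 0) (b := 1) (bound := fun _ => |C|) (μ := volume) (Metric.ball_mem_nhds t₀ hε0) ?_ ?_ ?_ ?_ ?_ ?_
  · exact key.2
  · filter_upwards [Metric.ball_mem_nhds t₀ hε0] with s hs
    exact ((fw_slice_x hc (hIoosub (hball hs))).pow 2).aestronglyMeasurable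
  · exact ((fw_slice_x hc (hIoosub ⟨ht1, ht2⟩)).pow 2).intervalIntegrable _ _
  · exact ((continuous_const.mul (fw_slice_x hc (hIoosub ⟨ht1, ht2⟩))).mul
      (fw_slice_x hct (hIoosub ⟨ht1, ht2⟩))).aestronglyMeasurable
  · refine Eventually.of_forall fun y hy => fun s hs => ?_
    rw [uIoc_of_le (by norm_num : (0:ℝ) ≤ 1)] at hy
    have hmem : (y, s) ∈ Icc (0:ℝ) 1 ×ˢ Icc (t₀ - ε) (t₀ + ε) := by
      rw [Metric.mem_ball, Real.dist_eq, abs_lt] at hs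
      exact ⟨⟨le_of_lt hy.1, hy.2⟩, ⟨by linarith, by linarith⟩⟩
    have := hC (y, s) hmem
    calc ‖2 * u y s * ut y s‖ ≤ C := by simpa [smul_eq_mul] using this
      _ ≤ |C| := le_abs_self C
  · exact intervalIntegrable_const
  · refine Eventually.of_forall fun y hy => fun s hs => ?_
    have hsI : s ∈ Ioo 0 T := hball hs
    have hd : HasDerivAt (fun s => u y s) (ut y s) s :=
      (hut y s (hIoosub hsI)).hasDerivAt
        (mem_nhds_iff.2 ⟨Ioo 0 T, hIoosub, isOpen_Ioo, hsI⟩)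
    have := hd.pow 2; simp at this; exact this

/-- The energy dissipation estimate : `∫ 2 u uₜ ≤ E`. -/
lemma fw_E_deriv_le (hc : ContinuousOn (fun p : ℝ × ℝ => u p.1 p.2) (univ ×ˢ Ico 0 T))
    (hper : ∀ x : ℝ, ∀ t ∈ Ico (0:ℝ) T, u (x + 1) t = u x t)
    (hux : ∀ x : ℝ, ∀ t ∈ Ico (0:ℝ) T, HasDerivAt (fun x' => u x' t) (ux x t) x)
    (hcx : ContinuousOn (fun p : ℝ × ℝ => ux p.1 p.2) (univ ×ˢ Ico 0 T))
    (hct : ContinuousOn (fun p : ℝ × ℝ => ut p.1 p.2) (univ ×ˢ Ico 0 T))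
    (heq : ∀ x : ℝ, ∀ t ∈ Ico (0:ℝ) T,
      ut x t + (3 / 2) * u x t * ux x t = ∫ y in (0:ℝ)..1, FWKernel y * ux (x - y) t)
    {t : ℝ} (ht : t ∈ Ico (0:ℝ) T) :
    (∫ y in (0:ℝ)..1, 2 * u y t * ut y t) ≤ ∫ y in (0:ℝ)..1, (u y t) ^ 2 := by
  have hcu : Continuous (fun z => u z t) := fw_slice_x hc ht
  have hcux : Continuous (fun z => ux z t) := fw_slice_x hcx ht
  have hcut : Continuous (fun z => ut z t) := fw_slice_x hct ht
  set I1 := ∫ w in (0:ℝ)..1, |u w t| with hI1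
  have hI1nn : 0 ≤ I1 :=
    intervalIntegral.integral_nonneg (by norm_num) (fun y _ => abs_nonneg _)
  -- split the integrand
  have hsplit : (∫ y in (0:ℝ)..1, 2 * u y t * ut y t)
      = (∫ y in (0:ℝ)..1, -3 * (u y t) ^ 2 * ux y t)
        + ∫ y in (0:ℝ)..1, 2 * u y t * (ut y t + (3/2) * u y t * ux y t) := by
    rw [← intervalIntegral.integral_add (f := fun y => -3 * (u y t) ^ 2 * ux y t)
      (g := fun y => 2 * u y t * (ut y t + (3/2) * u y t * ux y t))
      ((continuous_const.mul (hcu.pow 2) |>.mul hcux).intervalIntegrable _ _)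
      (((continuous_const.mul hcu).mul (hcut.add ((continuous_const.mul hcu).mul
        hcux))).intervalIntegrable _ _)]
    congr 1; funext y; ring
  -- first piece vanishes by periodicity
  have hcube : (∫ y in (0:ℝ)..1, -3 * (u y t) ^ 2 * ux y t) = 0 := by
    have hd : ∀ y ∈ uIcc (0:ℝ) 1, HasDerivAt (fun y => -((u y t) ^ 3))
        (-3 * (u y t) ^ 2 * ux y t) y := by
      intro y _
      have := ((hux y t ht).pow 3).neg
      refine this.congr_deriv ?_; push_cast; ring
    rw [intervalIntegral.integral_eq_sub_of_hasDerivAt hd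
      ((continuous_const.mul (hcu.pow 2) |>.mul hcux).intervalIntegrable _ _)]
    have : u 1 t = u 0 t := by simpa using hper 0 t ht
    rw [this]; ring
  -- second piece is bounded by I1²
  have hbd : (∫ y in (0:ℝ)..1, 2 * u y t * (ut y t + (3/2) * u y t * ux y t))
      ≤ ∫ y in (0:ℝ)..1, |u y t| * I1 := by
    apply intervalIntegral.integral_mono_on (by norm_num)
      (((continuous_const.mul hcu).mul (hcut.add ((continuous_const.mul hcu).mul
        hcux))).intervalIntegrable _ _)
      ((hcu.abs.mul continuous_const).intervalIntegrable _ _)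
    intro y hy
    show 2 * u y t * (ut y t + (3/2) * u y t * ux y t) ≤ |u y t| * I1
    have hconv : ut y t + (3/2) * u y t * ux y t
        = ∫ z in (0:ℝ)..1, FWKernel' z * u (y - z) t := by
      rw [heq y t ht]; exact fw_conv_eq hc hper hux hcx ht y
    rw [hconv]
    have hb := fw_conv_bound hc hper ht y
    calc 2 * u y t * ∫ z in (0:ℝ)..1, FWKernel' z * u (y - z) t
        ≤ |2 * u y t * ∫ z in (0:ℝ)..1, FWKernel' z * u (y - z) t| := le_abs_self _
      _ = 2 * |u y t| * |∫ z in (0:ℝ)..1, FWKernel' z * u (y - z) t| := by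
          rw [abs_mul, abs_mul]; norm_num
      _ ≤ 2 * |u y t| * ((1/2) * I1) := by
          apply mul_le_mul_of_nonneg_left hb (by positivity)
      _ = |u y t| * I1 := by ring
  have hI1int : (∫ y in (0:ℝ)..1, |u y t| * I1) = I1 ^ 2 := by
    rw [intervalIntegral.integral_mul_const]
    rw [← hI1]; ring
  have hCS : I1 ^ 2 ≤ ∫ y in (0:ℝ)..1, (u y t) ^ 2 := by
    have h1 : I1 ≤ Real.sqrt (∫ y in (0:ℝ)..1, (u y t) ^ 2) := l1_le_sqrt_l2 hcu
    have h2 : I1 ^ 2 ≤ Real.sqrt (∫ y in (0:ℝ)..1, (u y t) ^ 2) ^ 2 :=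
      pow_le_pow_left₀ hI1nn h1 2
    rwa [Real.sq_sqrt (fw_E_nonneg (u := u) t)] at h2
  calc (∫ y in (0:ℝ)..1, 2 * u y t * ut y t)
      = _ + _ := hsplit
    _ ≤ 0 + I1 ^ 2 := by rw [hcube]; rw [hI1int] at hbd; linarith
    _ ≤ ∫ y in (0:ℝ)..1, (u y t) ^ 2 := by rw [zero_add]; exact hCS

set_option maxHeartbeats 1000000 in
/-- Grönwall for the energy : `E t ≤ e^{2t} E 0` on `[0,T)`. -/
lemma fw_E_gronwall (hc : ContinuousOn (fun p : ℝ × ℝ => u p.1 p.2) (univ ×ˢ Ico 0 T))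
    (hper : ∀ x : ℝ, ∀ t ∈ Ico (0:ℝ) T, u (x + 1) t = u x t)
    (hux : ∀ x : ℝ, ∀ t ∈ Ico (0:ℝ) T, HasDerivAt (fun x' => u x' t) (ux x t) x)
    (hut : ∀ x : ℝ, ∀ t ∈ Ico (0:ℝ) T,
      HasDerivWithinAt (fun t' => u x t') (ut x t) (Ico 0 T) t)
    (hcx : ContinuousOn (fun p : ℝ × ℝ => ux p.1 p.2) (univ ×ˢ Ico 0 T))
    (hct : ContinuousOn (fun p : ℝ × ℝ => ut p.1 p.2) (univ ×ˢ Ico 0 T))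
    (heq : ∀ x : ℝ, ∀ t ∈ Ico (0:ℝ) T,
      ut x t + (3 / 2) * u x t * ux x t = ∫ y in (0:ℝ)..1, FWKernel y * ux (x - y) t)
    {t : ℝ} (ht : t ∈ Ico (0:ℝ) T) :
    (∫ y in (0:ℝ)..1, (u y t) ^ 2)
      ≤ Real.exp (2 * t) * ∫ y in (0:ℝ)..1, (u y 0) ^ 2 := by
  set E : ℝ → ℝ := fun s => ∫ y in (0:ℝ)..1, (u y s) ^ 2 with hE
  set E0 : ℝ := E 0 with hE0def
  have hE0nn : 0 ≤ E0 := fw_E_nonneg (u := u) 0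
  have h0T : (0:ℝ) ∈ Ico (0:ℝ) T := ⟨le_refl 0, lt_of_le_of_lt ht.1 ht.2⟩
  suffices hsuff : ∀ ε > 0, E t ≤ Real.exp (2 * t) * (E0 + ε) by
    by_contra hcon
    push_neg at hcon
    have hexp : 0 < Real.exp (2 * t) := Real.exp_pos _
    set δ := E t - Real.exp (2 * t) * E0 with hδdef
    have hδ : 0 < δ := by simp only [hδdef]; linarith
    have := hsuff (δ / (2 * Real.exp (2 * t))) (by positivity)
    have heq2 : Real.exp (2 * t) * (E0 + δ / (2 * Real.exp (2 * t)))
        = Real.exp (2 * t) * E0 + δ / 2 := by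
      field_simp
    rw [heq2] at this
    simp only [hδdef] at this
    linarith
  intro ε hε
  by_contra hcon
  push_neg at hcon
  set S := {s : ℝ | s ∈ Ico 0 T ∧ Real.exp (2 * s) * (E0 + ε) < E s} with hS
  have hSne : S.Nonempty := ⟨t, ht, hcon⟩
  have hSbd : BddBelow S := ⟨0, fun s hs => hs.1.1⟩
  set c := sInf S with hcdef
  have hc0 : 0 ≤ c := le_csInf hSne (fun s hs => hs.1.1)
  have hcT : c < T := lt_of_le_of_lt (csInf_le hSbd ⟨ht, hcon⟩) ht.2
  have hcI : c ∈ Ico (0:ℝ) T := ⟨hc0, hcT⟩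
  have hbelow : ∀ s ∈ Ico (0:ℝ) T, s < c → E s ≤ Real.exp (2 * s) * (E0 + ε) := by
    intro s hs hsc
    by_contra h'
    push_neg at h'
    exact absurd (csInf_le hSbd ⟨hs, h'⟩) (not_le.2 hsc)
  -- `E c ≥` bound, via a sequence in `S` tending to `c`
  obtain ⟨w, hwanti, hwtend, hwmem⟩ := exists_seq_tendsto_sInf hSne hSbd
  have hEc : Real.exp (2 * c) * (E0 + ε) ≤ E c := by
    have hcont : ContinuousWithinAt E (Ico 0 T) c := fw_E_cont hc hcI
    have hwin : ∀ n, w n ∈ Ico (0:ℝ) T := fun n => (hwmem n).1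
    have htend : Tendsto (fun n => E (w n)) atTop (𝓝 (E c)) := by
      apply (hcont.tendsto).comp
      rw [tendsto_nhdsWithin_iff]
      exact ⟨hwtend, Eventually.of_forall hwin⟩
    have htendb : Tendsto (fun n => Real.exp (2 * w n) * (E0 + ε)) atTop
        (𝓝 (Real.exp (2 * c) * (E0 + ε))) := by
      have : Continuous (fun s : ℝ => Real.exp (2 * s) * (E0 + ε)) := by continuity
      exact (this.tendsto c).comp hwtend
    exact le_of_tendsto_of_tendsto' htendb htend (fun n => le_of_lt (hwmem n).2)
  have hcpos : 0 < c := by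
    rcases lt_or_eq_of_le hc0 with h | h
    · exact h
    · exfalso
      rw [← h] at hEc
      simp only [mul_zero, Real.exp_zero, one_mul] at hEc
      rw [← hE0def] at hEc
      linarith
  -- `E c ≤` bound, via left limits
  have hEcle : E c ≤ Real.exp (2 * c) * (E0 + ε) := by
    have hcont : ContinuousWithinAt (fun s => E s - Real.exp (2 * s) * (E0 + ε)) (Ico 0 c) c := by
      apply ContinuousWithinAt.sub
      · exact (fw_E_cont hc hcI).mono (fun s hs => ⟨hs.1, lt_of_lt_of_le hs.2 (le_of_lt hcT)⟩)
      · exact ((Real.continuous_exp.comp (continuous_const.mul continuous_id)).mul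
          continuous_const).continuousWithinAt
    have hne : (𝓝[Ico (0:ℝ) c] c).NeBot := by
      rw [← mem_closure_iff_nhdsWithin_neBot, closure_Ico (ne_of_lt hcpos)]
      exact ⟨hc0, le_refl c⟩
    have hev : ∀ᶠ s in 𝓝[Ico (0:ℝ) c] c, E s - Real.exp (2 * s) * (E0 + ε) ≤ 0 := by
      filter_upwards [eventually_mem_nhdsWithin] with s hs
      have := hbelow s ⟨hs.1, lt_trans hs.2 hcT⟩ hs.2; linarith
    have hlim : Tendsto (fun s => E s - Real.exp (2 * s) * (E0 + ε)) (𝓝[Ico (0:ℝ) c] c)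
        (𝓝 (E c - Real.exp (2 * c) * (E0 + ε))) := hcont.tendsto
    have := le_of_tendsto hlim hev
    linarith
  have hEceq : E c = Real.exp (2 * c) * (E0 + ε) := le_antisymm hEcle hEc
  -- derivative of `E` at `c`
  have hE' : HasDerivAt E (∫ y in (0:ℝ)..1, 2 * u y c * ut y c) c :=
    fw_E_deriv hc hut hct ⟨hcpos, hcT⟩
  have hE'le : (∫ y in (0:ℝ)..1, 2 * u y c * ut y c) ≤ E c :=
    fw_E_deriv_le hc hper hux hcx hct heq hcI
  -- the comparison function ψ
  set ψ : ℝ → ℝ := fun s => E s - Real.exp (2 * s) * (E0 + ε) with hψ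
  have hψd : HasDerivAt ψ ((∫ y in (0:ℝ)..1, 2 * u y c * ut y c)
      - 2 * Real.exp (2 * c) * (E0 + ε)) c := by
    apply hE'.sub
    have h1 : HasDerivAt (fun s : ℝ => Real.exp (2 * s)) (2 * Real.exp (2 * c)) c := by
      have h0 := (Real.hasDerivAt_exp (2 * c)).comp c ((hasDerivAt_id c).const_mul 2)
      have : (fun s : ℝ => Real.exp (2 * s)) = Real.exp ∘ (fun s : ℝ => 2 * s) := rfl
      rw [this]
      refine h0.congr_deriv ?_
      ring
    simpa [mul_comm, mul_assoc] using h1.mul_const (E0 + ε)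
  have hψc : ψ c = 0 := by simp only [hψ]; rw [hEceq]; ring
  have hψ'neg : (∫ y in (0:ℝ)..1, 2 * u y c * ut y c)
      - 2 * Real.exp (2 * c) * (E0 + ε) < 0 := by
    have hexp : 0 < Real.exp (2 * c) := Real.exp_pos _
    have : 0 < Real.exp (2 * c) * (E0 + ε) := by positivity
    rw [hEceq] at hE'le
    linarith
  obtain ⟨s, hsIoo, hspos⟩ := pos_left_of_neg_deriv hcpos hψd hψc hψ'neg
  have hsmem : s ∈ S := by
    refine ⟨⟨le_of_lt hsIoo.1, lt_trans hsIoo.2 hcT⟩, ?_⟩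
    simp only [hψ] at hspos
    linarith
  exact absurd (csInf_le hSbd hsmem) (not_le.2 hsIoo.2)

set_option maxHeartbeats 2000000 in
/-- The main maximum-principle estimate, with an `ε`-margin. -/
lemma fw_sup_bound_eps (hT : 0 < T)
    (hc : ContinuousOn (fun p : ℝ × ℝ => u p.1 p.2) (univ ×ˢ Ico 0 T))
    (hper : ∀ x : ℝ, ∀ t ∈ Ico (0:ℝ) T, u (x + 1) t = u x t)
    (hux : ∀ x : ℝ, ∀ t ∈ Ico (0:ℝ) T, HasDerivAt (fun x' => u x' t) (ux x t) x)
    (hut : ∀ x : ℝ, ∀ t ∈ Ico (0:ℝ) T,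
      HasDerivWithinAt (fun t' => u x t') (ut x t) (Ico 0 T) t)
    (hcx : ContinuousOn (fun p : ℝ × ℝ => ux p.1 p.2) (univ ×ˢ Ico 0 T))
    (hct : ContinuousOn (fun p : ℝ × ℝ => ut p.1 p.2) (univ ×ˢ Ico 0 T))
    (heq : ∀ x : ℝ, ∀ t ∈ Ico (0:ℝ) T,
      ut x t + (3 / 2) * u x t * ux x t = ∫ y in (0:ℝ)..1, FWKernel y * ux (x - y) t)
    {ε : ℝ} (hε : 0 < ε) :
    ∀ x : ℝ, ∀ t ∈ Ico (0:ℝ) T,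
      |u x t| ≤ sSup ((fun y => |u y 0|) '' Icc (0:ℝ) 1)
        + (Real.exp t - 1) / 2 * Real.sqrt (∫ y in (0:ℝ)..1, (u y 0) ^ 2)
        + ε * Real.exp t := by
  have h0T : (0:ℝ) ∈ Ico (0:ℝ) T := ⟨le_refl 0, hT⟩
  set M0 : ℝ := sSup ((fun y => |u y 0|) '' Icc (0:ℝ) 1) with hM0def
  set E0 : ℝ := ∫ y in (0:ℝ)..1, (u y 0) ^ 2 with hE0def
  set R : ℝ := Real.sqrt E0 with hRdef
  have hRnn : 0 ≤ R := Real.sqrt_nonneg _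
  -- M0 bounds |u x 0| for every x
  have hbdd : BddAbove ((fun y => |u y 0|) '' Icc (0:ℝ) 1) :=
    (isCompact_Icc.image_of_continuousOn ((fw_slice_x hc h0T).abs.continuousOn)).bddAbove
  have hM0 : ∀ x : ℝ, |u x 0| ≤ M0 := by
    intro x
    have hfr : |u (Int.fract x) 0| = |u x 0| := by rw [fw_fract hper h0T x]
    rw [← hfr]
    exact le_csSup hbdd ⟨Int.fract x, ⟨Int.fract_nonneg x, le_of_lt (Int.fract_lt_one x)⟩, rfl⟩
  have hM0nn : 0 ≤ M0 := le_trans (abs_nonneg _) (hM0 0)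
  -- the L² bound
  have hL2 : ∀ t ∈ Ico (0:ℝ) T,
      Real.sqrt (∫ y in (0:ℝ)..1, (u y t) ^ 2) ≤ Real.exp t * R := by
    intro t ht
    have h1 := fw_E_gronwall hc hper hux hut hcx hct heq ht
    have h2 : Real.sqrt (∫ y in (0:ℝ)..1, (u y t) ^ 2)
        ≤ Real.sqrt (Real.exp (2 * t) * E0) := Real.sqrt_le_sqrt h1
    have h3 : Real.exp (2 * t) = Real.exp t * Real.exp t := by
      rw [two_mul, Real.exp_add]
    calc Real.sqrt (∫ y in (0:ℝ)..1, (u y t) ^ 2)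
        ≤ Real.sqrt (Real.exp (2 * t) * E0) := h2
      _ = Real.exp t * R := by
          rw [show Real.exp (2 * t) * E0 = (Real.exp t) ^ 2 * E0 by rw [h3]; ring,
            Real.sqrt_mul (sq_nonneg _), Real.sqrt_sq (Real.exp_nonneg t)]
  -- the comparison function
  set B : ℝ → ℝ := fun s => M0 + (Real.exp s - 1) / 2 * R + ε * Real.exp s with hBdef
  have hBcont : Continuous B := by
    rw [hBdef]; fun_prop
  have hBderiv : ∀ s, HasDerivAt B (Real.exp s / 2 * R + ε * Real.exp s) s := by
    intro s
    have h2 : HasDerivAt (fun s : ℝ => (Real.exp s - 1) / 2 * R) (Real.exp s / 2 * R) s := by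
      simpa using (((Real.hasDerivAt_exp s).sub_const 1).div_const 2).mul_const R
    have h3 : HasDerivAt (fun s : ℝ => ε * Real.exp s) (ε * Real.exp s) s :=
      (Real.hasDerivAt_exp s).const_mul ε
    have h4 := ((hasDerivAt_const s M0).add h2).add h3
    simp at h4; exact h4
  have hB0 : ∀ x, |u x 0| < B 0 := by
    intro x
    have : B 0 = M0 + ε := by simp [hBdef]
    rw [this]
    have := hM0 x; linarith
  -- the contradiction argument
  by_contra hcon
  push_neg at hcon
  obtain ⟨x₀, t₀, ht₀, hviol⟩ := hcon
  set S := {s : ℝ | s ∈ Ico 0 T ∧ ∃ x, B s < |u x s|} with hSdef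
  have hSne : S.Nonempty := ⟨t₀, ht₀, x₀, hviol⟩
  have hSbd : BddBelow S := ⟨0, fun s hs => hs.1.1⟩
  set c := sInf S with hcdef
  have hc0 : 0 ≤ c := le_csInf hSne (fun s hs => hs.1.1)
  have hcT : c < T := lt_of_le_of_lt (csInf_le hSbd ⟨ht₀, x₀, hviol⟩) ht₀.2
  have hcI : c ∈ Ico (0:ℝ) T := ⟨hc0, hcT⟩
  have hbelow : ∀ s ∈ Ico (0:ℝ) T, s < c → ∀ x, |u x s| ≤ B s := by
    intro s hs hsc x
    by_contra h'
    push_neg at h'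
    exact absurd (csInf_le hSbd ⟨hs, x, h'⟩) (not_le.2 hsc)
  -- a maximizing point x* at time c
  obtain ⟨w, -, hwtend, hwmem⟩ := exists_seq_tendsto_sInf hSne hSbd
  choose xw hxw using fun n => (hwmem n).2
  set fx : ℕ → ℝ := fun n => Int.fract (xw n) with hfxdef
  have hfx1 : ∀ n, fx n ∈ Icc (0:ℝ) 1 := fun n =>
    ⟨Int.fract_nonneg _, le_of_lt (Int.fract_lt_one _)⟩
  have hfx2 : ∀ n, B (w n) < |u (fx n) (w n)| := by
    intro n
    have := fw_fract hper (hwmem n).1 (xw n)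
    simp only [hfxdef]
    rw [this]
    exact hxw n
  obtain ⟨xs, hxsmem, φ, hφ, hφtend⟩ := isCompact_Icc.tendsto_subseq hfx1
  have hwφ : Tendsto (w ∘ φ) atTop (𝓝 c) := hwtend.comp hφ.tendsto_atTop
  have hpair : Tendsto (fun n => (fx (φ n), w (φ n))) atTop (𝓝[univ ×ˢ Ico 0 T] (xs, c)) := by
    rw [tendsto_nhdsWithin_iff]
    exact ⟨hφtend.prodMk_nhds hwφ, Eventually.of_forall fun n => ⟨trivial, (hwmem (φ n)).1⟩⟩
  have hulim : Tendsto (fun n => |u (fx (φ n)) (w (φ n))|) atTop (𝓝 |u xs c|) := by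
    have := (hc.continuousWithinAt (⟨trivial, hcI⟩ : ((xs, c) : ℝ × ℝ) ∈ univ ×ˢ Ico 0 T)).tendsto.comp hpair
    exact this.abs
  have hBlim : Tendsto (fun n => B (w (φ n))) atTop (𝓝 (B c)) := (hBcont.tendsto c).comp hwφ
  have hBc_le : B c ≤ |u xs c| :=
    le_of_tendsto_of_tendsto' hBlim hulim (fun n => le_of_lt (hfx2 (φ n)))
  have hcpos : 0 < c := by
    rcases lt_or_eq_of_le hc0 with h | h
    · exact h
    · exfalso
      rw [← h] at hBc_le
      exact absurd hBc_le (not_le.2 (hB0 xs))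
  -- all points are below B c at time c
  have hmax : ∀ x, |u x c| ≤ B c := by
    intro x
    have hcont : ContinuousWithinAt (fun s => |u x s| - B s) (Ico 0 c) c := by
      apply ContinuousWithinAt.sub
      · exact ((fw_slice_t hc x c hcI).mono
          (fun s hs => ⟨hs.1, lt_trans hs.2 hcT⟩)).abs
      · exact hBcont.continuousWithinAt
    have hne : (𝓝[Ico (0:ℝ) c] c).NeBot := by
      rw [← mem_closure_iff_nhdsWithin_neBot, closure_Ico (ne_of_lt hcpos)]
      exact ⟨hc0, le_refl c⟩
    have hev : ∀ᶠ s in 𝓝[Ico (0:ℝ) c] c, |u x s| - B s ≤ 0 := by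
      filter_upwards [eventually_mem_nhdsWithin] with s hs
      have := hbelow s ⟨hs.1, lt_trans hs.2 hcT⟩ hs.2 x
      linarith
    have := le_of_tendsto hcont.tendsto hev
    linarith
  have heqc : |u xs c| = B c := le_antisymm (hmax xs) hBc_le
  have hcIoo : c ∈ Ioo (0:ℝ) T := ⟨hcpos, hcT⟩
  have hIcoNhds : Ico (0:ℝ) T ∈ 𝓝 c :=
    mem_nhds_iff.2 ⟨Ioo 0 T, Ioo_subset_Ico_self, isOpen_Ioo, hcIoo⟩
  -- the convolution bound at time c
  have hconvbd : ∀ x : ℝ, |∫ y in (0:ℝ)..1, FWKernel' y * u (x - y) c| ≤ Real.exp c / 2 * R := by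
    intro x
    calc |∫ y in (0:ℝ)..1, FWKernel' y * u (x - y) c|
        ≤ (1/2) * ∫ w' in (0:ℝ)..1, |u w' c| := fw_conv_bound hc hper hcI x
      _ ≤ (1/2) * Real.sqrt (∫ y in (0:ℝ)..1, (u y c) ^ 2) := by
          have := l1_le_sqrt_l2 (fw_slice_x hc hcI)
          linarith
      _ ≤ (1/2) * (Real.exp c * R) := by
          have := hL2 c hcI
          linarith
      _ = Real.exp c / 2 * R := by ring
  -- dichotomy on the sign of u xs c
  rcases le_or_gt 0 (u xs c) with hsign | hsign
  · -- maximum case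
    have huval : u xs c = B c := by rw [← heqc, abs_of_nonneg hsign]
    have hmax' : IsLocalMax (fun x => u x c) xs := by
      apply Filter.Eventually.of_forall
      intro x
      simp only []
      rw [huval]
      exact le_trans (le_abs_self _) (hmax x)
    have hux0 : ux xs c = 0 := hmax'.hasDerivAt_eq_zero (hux xs c hcI)
    have hutval : ut xs c = ∫ y in (0:ℝ)..1, FWKernel' y * u (xs - y) c := by
      have h := heq xs c hcI
      rw [hux0, mul_zero, add_zero, fw_conv_eq hc hper hux hcx hcI xs] at h
      exact h
    set ψ : ℝ → ℝ := fun s => u xs s - B s with hψdef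
    have hψd : HasDerivAt ψ (ut xs c - (Real.exp c / 2 * R + ε * Real.exp c)) c :=
      ((hut xs c hcI).hasDerivAt hIcoNhds).sub (hBderiv c)
    have hψc : ψ c = 0 := by simp only [hψdef]; rw [huval]; ring
    have hneg : ut xs c - (Real.exp c / 2 * R + ε * Real.exp c) < 0 := by
      have h1 : ut xs c ≤ Real.exp c / 2 * R := by
        rw [hutval]
        exact le_trans (le_abs_self _) (hconvbd xs)
      have h2 : 0 < ε * Real.exp c := by positivity
      linarith
    obtain ⟨s, hsIoo, hspos⟩ := pos_left_of_neg_deriv hcpos hψd hψc hneg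
    have hsS : s ∈ S := by
      refine ⟨⟨le_of_lt hsIoo.1, lt_trans hsIoo.2 hcT⟩, xs, ?_⟩
      simp only [hψdef] at hspos
      calc B s < u xs s := by linarith
        _ ≤ |u xs s| := le_abs_self _
    exact absurd (csInf_le hSbd hsS) (not_le.2 hsIoo.2)
  · -- minimum case
    have huval : u xs c = -(B c) := by
      rw [← heqc, abs_of_neg hsign, neg_neg]
    have hmin' : IsLocalMin (fun x => u x c) xs := by
      apply Filter.Eventually.of_forall
      intro x
      simp only []
      rw [huval]
      have := hmax x
      have := neg_abs_le (u x c)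
      linarith
    have hux0 : ux xs c = 0 := hmin'.hasDerivAt_eq_zero (hux xs c hcI)
    have hutval : ut xs c = ∫ y in (0:ℝ)..1, FWKernel' y * u (xs - y) c := by
      have h := heq xs c hcI
      rw [hux0, mul_zero, add_zero, fw_conv_eq hc hper hux hcx hcI xs] at h
      exact h
    set ψ : ℝ → ℝ := fun s => -(u xs s) - B s with hψdef
    have hψd : HasDerivAt ψ (-(ut xs c) - (Real.exp c / 2 * R + ε * Real.exp c)) c :=
      (((hut xs c hcI).hasDerivAt hIcoNhds).neg).sub (hBderiv c)
    have hψc : ψ c = 0 := by simp only [hψdef]; rw [huval]; ring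
    have hneg : -(ut xs c) - (Real.exp c / 2 * R + ε * Real.exp c) < 0 := by
      have h1 : -(ut xs c) ≤ Real.exp c / 2 * R := by
        rw [hutval]
        exact le_trans (neg_le_abs _) (hconvbd xs)
      have h2 : 0 < ε * Real.exp c := by positivity
      linarith
    obtain ⟨s, hsIoo, hspos⟩ := pos_left_of_neg_deriv hcpos hψd hψc hneg
    have hsS : s ∈ S := by
      refine ⟨⟨le_of_lt hsIoo.1, lt_trans hsIoo.2 hcT⟩, xs, ?_⟩
      simp only [hψdef] at hspos
      calc B s < -(u xs s) := by linarith
        _ ≤ |u xs s| := neg_le_abs _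
    exact absurd (csInf_le hSbd hsS) (not_le.2 hsIoo.2)

end FW

/-- L∞ bound for classical periodic Fornberg–Whitham solutions:
`|u(x,t)| ≤ sup_{y ∈ [0,1]} |u(y,0)| + (e^t - 1) (∫_0^1 u(y,0)² dy)^{1/2}`; in
particular the solution is bounded on `ℝ × [0,T)`. -/
theorem fw_Linfty_bound (T : ℝ) (hT : 0 < T) (u ux ut : ℝ → ℝ → ℝ)
    (hu : IsClassicalFWSolution T u ux ut) :
    (∀ x : ℝ, ∀ t ∈ Set.Ico (0 : ℝ) T,
      |u x t| ≤ sSup ((fun y => |u y 0|) '' Set.Icc (0 : ℝ) 1)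
        + (Real.exp t - 1) * Real.sqrt (∫ y in (0:ℝ)..1, (u y 0) ^ 2)) ∧
    ∃ C : ℝ, ∀ x : ℝ, ∀ t ∈ Set.Ico (0 : ℝ) T, |u x t| ≤ C := by
  obtain ⟨hc, hper, hux, hut, hcx, hct, heq⟩ := hu
  set M0 : ℝ := sSup ((fun y => |u y 0|) '' Set.Icc (0:ℝ) 1) with hM0def
  set R : ℝ := Real.sqrt (∫ y in (0:ℝ)..1, (u y 0) ^ 2) with hRdef
  have hRnn : 0 ≤ R := Real.sqrt_nonneg _
  have main : ∀ x : ℝ, ∀ t ∈ Set.Ico (0:ℝ) T, |u x t| ≤ M0 + (Real.exp t - 1) * R := by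
    intro x t ht
    have hkey : ∀ ε > 0, |u x t| ≤ M0 + (Real.exp t - 1) / 2 * R + ε * Real.exp t :=
      fun ε hε => fw_sup_bound_eps hT hc hper hux hut hcx hct heq hε x t ht
    have h2 : |u x t| ≤ M0 + (Real.exp t - 1) / 2 * R := by
      by_contra h'
      push_neg at h'
      have hexp : 0 < Real.exp t := Real.exp_pos t
      set δ := |u x t| - (M0 + (Real.exp t - 1) / 2 * R) with hδdef
      have hδ : 0 < δ := by simp only [hδdef]; linarith
      have h3 := hkey (δ / (2 * Real.exp t)) (by positivity)
      have h4 : δ / (2 * Real.exp t) * Real.exp t = δ / 2 := by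
        field_simp
      rw [h4] at h3
      simp only [hδdef] at h3
      linarith
    have h5 : (Real.exp t - 1) / 2 * R ≤ (Real.exp t - 1) * R := by
      have h6 : 1 ≤ Real.exp t := Real.one_le_exp ht.1
      nlinarith
    linarith
  refine ⟨main, M0 + (Real.exp T - 1) * R, fun x t ht => ?_⟩
  have h1 := main x t ht
  have h2 : Real.exp t ≤ Real.exp T := Real.exp_le_exp.2 (le_of_lt ht.2)
  nlinarith
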